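/- Tsirelson's bound with unique maximizer and CHSH violation: for every c ∈ Q one has c₁₁ + c₁₂ + c₂₁ − c₂₂ ≤ 2√2; the point c* := (1/√2)·(1,1,1,−1) lies in Q and attains equality, it is the unique point of Q attaining equality, and c* does not lie in the classical polytope 𝒞 (indeed c*₁₁ + c*₁₂ + c*₂₁ − c*₂₂ = 2√2 > 2, while every c ∈ 𝒞 satisfies c₁₁ + c₁₂ + c₂₁ − c₂₂ ≤ 2). -/

import Mathlib

open Matrix

def Cmat (c : Fin 4 → ℝ) (u v : ℝ) : Matrix (Fin 4) (Fin 4) ℝ :=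
  !![1, u, c 0, c 1;
     u, 1, c 2, c 3;
     c 0, c 2, 1, v;
     c 1, c 3, v, 1]

def Qbody : Set (Fin 4 → ℝ) := {c | ∃ u v : ℝ, (Cmat c u v).PosSemidef}

/-- The classical polytope: convex hull of the eight even sign vectors. -/
def Cpoly : Set (Fin 4 → ℝ) :=
  convexHull ℝ {e : Fin 4 → ℝ | (∀ i, e i = 1 ∨ e i = -1) ∧ e 0 * e 1 * e 2 * e 3 = 1}

/-- The maximally CHSH-violating correlation `c* = (1/√2)·(1,1,1,−1)`. -/
noncomputable def cstar : Fin 4 → ℝ :=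
  (1 / Real.sqrt 2) • ![1, 1, 1, -1]

lemma quad (c : Fin 4 → ℝ) (u v : ℝ) (x : Fin 4 → ℝ) :
    star x ⬝ᵥ Cmat c u v *ᵥ x =
      x 0^2 + x 1^2 + x 2^2 + x 3^2 + 2*u*(x 0*x 1) + 2*v*(x 2*x 3)
        + 2*(c 0)*(x 0*x 2) + 2*(c 1)*(x 0*x 3) + 2*(c 2)*(x 1*x 2) + 2*(c 3)*(x 1*x 3) := by
  simp [Cmat, dotProduct, Matrix.mulVec, Fin.sum_univ_four, Matrix.vecHead, Matrix.vecTail]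
  ring

lemma mv0 (c : Fin 4 → ℝ) (u v : ℝ) (x : Fin 4 → ℝ) :
    (Cmat c u v *ᵥ x) 0 = x 0 + u * x 1 + c 0 * x 2 + c 1 * x 3 := by
  simp [Cmat, Matrix.mulVec, dotProduct, Fin.sum_univ_four, Matrix.vecHead, Matrix.vecTail]

lemma mv1 (c : Fin 4 → ℝ) (u v : ℝ) (x : Fin 4 → ℝ) :
    (Cmat c u v *ᵥ x) 1 = u * x 0 + x 1 + c 2 * x 2 + c 3 * x 3 := by
  simp [Cmat, Matrix.mulVec, dotProduct, Fin.sum_univ_four, Matrix.vecHead, Matrix.vecTail]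

lemma mv2 (c : Fin 4 → ℝ) (u v : ℝ) (x : Fin 4 → ℝ) :
    (Cmat c u v *ᵥ x) 2 = c 0 * x 0 + c 2 * x 1 + x 2 + v * x 3 := by
  simp [Cmat, Matrix.mulVec, dotProduct, Fin.sum_univ_four, Matrix.vecHead, Matrix.vecTail]

lemma mv3 (c : Fin 4 → ℝ) (u v : ℝ) (x : Fin 4 → ℝ) :
    (Cmat c u v *ᵥ x) 3 = c 1 * x 0 + c 3 * x 1 + v * x 2 + x 3 := by
  simp [Cmat, Matrix.mulVec, dotProduct, Fin.sum_univ_four, Matrix.vecHead, Matrix.vecTail]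

lemma cs0 : cstar 0 = 1 / Real.sqrt 2 := by simp [cstar]
lemma cs1 : cstar 1 = 1 / Real.sqrt 2 := by simp [cstar]
lemma cs2 : cstar 2 = 1 / Real.sqrt 2 := by simp [cstar]
lemma cs3 : cstar 3 = -(1 / Real.sqrt 2) := by simp [cstar]

lemma cstar_mem : cstar ∈ Qbody := by
  refine ⟨0, 0, ?_⟩
  have h2 : Real.sqrt 2 * Real.sqrt 2 = 2 := Real.mul_self_sqrt (by norm_num)
  have hne : Real.sqrt 2 ≠ 0 := by positivity
  have h : Cmat cstar 0 0 =
      (!![1, 0, 1 / Real.sqrt 2, 1 / Real.sqrt 2;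
          0, 1, 1 / Real.sqrt 2, -(1 / Real.sqrt 2)] : Matrix (Fin 2) (Fin 4) ℝ)ᴴ *
      !![1, 0, 1 / Real.sqrt 2, 1 / Real.sqrt 2;
         0, 1, 1 / Real.sqrt 2, -(1 / Real.sqrt 2)] := by
    have hBt : (!![1, 0, 1 / Real.sqrt 2, 1 / Real.sqrt 2;
          0, 1, 1 / Real.sqrt 2, -(1 / Real.sqrt 2)] : Matrix (Fin 2) (Fin 4) ℝ)ᴴ =
        (!![1, 0; 0, 1; 1 / Real.sqrt 2, 1 / Real.sqrt 2;
           1 / Real.sqrt 2, -(1 / Real.sqrt 2)] : Matrix (Fin 4) (Fin 2) ℝ) := by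
      ext i j
      fin_cases i <;> fin_cases j <;> rfl
    rw [hBt, Cmat, cs0, cs1, cs2, cs3]
    ext i j
    fin_cases i <;> fin_cases j <;>
      simp [Matrix.mul_apply, Fin.sum_univ_two, Matrix.cons_val_zero, Matrix.cons_val_one,
        Matrix.head_cons, Matrix.cons_val_two, Matrix.cons_val_three, Matrix.tail_cons, Matrix.vecHead, Matrix.vecTail] <;>
      field_simp <;> nlinarith [h2]
  rw [h]
  exact Matrix.posSemidef_conjTranspose_mul_self _

lemma tsirelson {c : Fin 4 → ℝ} (hc : c ∈ Qbody) :
    c 0 + c 1 + c 2 - c 3 ≤ 2 * Real.sqrt 2 := by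
  obtain ⟨u, v, hM⟩ := hc
  have h2 : Real.sqrt 2 * Real.sqrt 2 = 2 := Real.mul_self_sqrt (by norm_num)
  have hpos : 0 < Real.sqrt 2 := by positivity
  have hx := hM.dotProduct_mulVec_nonneg ![Real.sqrt 2, 0, -1, -1]
  have hy := hM.dotProduct_mulVec_nonneg ![0, Real.sqrt 2, -1, 1]
  rw [quad] at hx hy
  simp only [Matrix.cons_val_zero, Matrix.cons_val_one, Matrix.head_cons,
    Matrix.cons_val_two, Matrix.tail_cons, Matrix.cons_val_three] at hx hy
  nlinarith [hx, hy, h2, hpos]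

lemma tsirelson_eq {c : Fin 4 → ℝ} (hc : c ∈ Qbody)
    (he : c 0 + c 1 + c 2 - c 3 = 2 * Real.sqrt 2) : c = cstar := by
  obtain ⟨u, v, hM⟩ := hc
  have h2 : Real.sqrt 2 * Real.sqrt 2 = 2 := Real.mul_self_sqrt (by norm_num)
  have hpos : 0 < Real.sqrt 2 := by positivity
  set s := Real.sqrt 2 with hs
  have hx := hM.dotProduct_mulVec_nonneg ![s, 0, -1, -1]
  have hy := hM.dotProduct_mulVec_nonneg ![0, s, -1, 1]
  rw [quad] at hx hy
  simp only [Matrix.cons_val_zero, Matrix.cons_val_one, Matrix.head_cons,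
    Matrix.cons_val_two, Matrix.tail_cons, Matrix.cons_val_three] at hx hy
  -- both quadratic forms vanish
  have hsq : s ^ 2 = 2 := by rw [sq]; exact h2
  have hes : s * (c 0 + c 1 + c 2 - c 3) = s * (2 * s) := by rw [he]
  have hx0 : star ![s, 0, -1, -1] ⬝ᵥ Cmat c u v *ᵥ ![s, 0, -1, -1] = 0 := by
    rw [quad]
    simp only [Matrix.cons_val_zero, Matrix.cons_val_one, Matrix.head_cons,
      Matrix.cons_val_two, Matrix.tail_cons, Matrix.cons_val_three]
    nlinarith [hx, hy, hsq, hes]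
  have hy0 : star ![0, s, -1, 1] ⬝ᵥ Cmat c u v *ᵥ ![0, s, -1, 1] = 0 := by
    rw [quad]
    simp only [Matrix.cons_val_zero, Matrix.cons_val_one, Matrix.head_cons,
      Matrix.cons_val_two, Matrix.tail_cons, Matrix.cons_val_three]
    nlinarith [hx, hy, hsq, hes]
  have hkx := (hM.dotProduct_mulVec_zero_iff _).mp hx0
  have hky := (hM.dotProduct_mulVec_zero_iff _).mp hy0
  have ex0 := congrFun hkx 0
  have ex2 := congrFun hkx 2
  have ex3 := congrFun hkx 3
  have ey1 := congrFun hky 1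
  have ey2 := congrFun hky 2
  have ey3 := congrFun hky 3
  rw [mv0] at ex0; rw [mv2] at ex2; rw [mv3] at ex3
  rw [mv1] at ey1; rw [mv2] at ey2; rw [mv3] at ey3
  simp only [Matrix.cons_val_zero, Matrix.cons_val_one, Matrix.head_cons, Matrix.cons_val_two, Matrix.tail_cons, Matrix.cons_val_three, Pi.zero_apply] at ex0 ex2 ex3 ey1 ey2 ey3
  -- solve: v = 0, c 0 = c 1 = c 2 = 1/s, c 3 = -1/s
  have hsne : s ≠ 0 := ne_of_gt hpos
  have hv : v = 0 := by nlinarith [ex0, ex2, ex3, h2, hpos]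
  subst hv
  funext i
  have hc0 : c 0 = 1 / s := by field_simp; linarith [ex2]
  have hc1 : c 1 = 1 / s := by field_simp; linarith [ex3]
  have hc2 : c 2 = 1 / s := by field_simp; linarith [ey2]
  have hc3 : c 3 = -(1 / s) := by field_simp; linarith [ey3]
  fin_cases i
  · rw [show (⟨0, by norm_num⟩ : Fin 4) = 0 from rfl, hc0, cs0, hs]
  · rw [show (⟨1, by norm_num⟩ : Fin 4) = 1 from rfl, hc1, cs1, hs]
  · rw [show (⟨2, by norm_num⟩ : Fin 4) = 2 from rfl, hc2, cs2, hs]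
  · rw [show (⟨3, by norm_num⟩ : Fin 4) = 3 from rfl, hc3, cs3, hs]

lemma cpoly_bound {c : Fin 4 → ℝ} (hc : c ∈ Cpoly) : c 0 + c 1 + c 2 - c 3 ≤ 2 := by
  have hlin : IsLinearMap ℝ (fun c : Fin 4 → ℝ => c 0 + c 1 + c 2 - c 3) := by
    constructor <;> intros <;> simp [Pi.add_apply, Pi.smul_apply, smul_eq_mul] <;> ring
  have hconv : Convex ℝ {c : Fin 4 → ℝ | c 0 + c 1 + c 2 - c 3 ≤ 2} :=
    convex_halfSpace_le hlin 2
  refine convexHull_min ?_ hconv hc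
  rintro e ⟨hsign, hprod⟩
  rcases hsign 0 with h0 | h0 <;> rcases hsign 1 with h1 | h1 <;>
    rcases hsign 2 with h2 | h2 <;> rcases hsign 3 with h3 | h3 <;>
    (revert hprod; norm_num [Set.mem_setOf_eq, h0, h1, h2, h3])

theorem stmt19 :
    (∀ c ∈ Qbody, c 0 + c 1 + c 2 - c 3 ≤ 2 * Real.sqrt 2) ∧
    cstar ∈ Qbody ∧
    cstar 0 + cstar 1 + cstar 2 - cstar 3 = 2 * Real.sqrt 2 ∧
    (∀ c ∈ Qbody, c 0 + c 1 + c 2 - c 3 = 2 * Real.sqrt 2 → c = cstar) ∧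
    cstar ∉ Cpoly ∧
    (2 : ℝ) < 2 * Real.sqrt 2 ∧
    (∀ c ∈ Cpoly, c 0 + c 1 + c 2 - c 3 ≤ 2) := by
  have h2 : Real.sqrt 2 * Real.sqrt 2 = 2 := Real.mul_self_sqrt (by norm_num)
  have hpos : 0 < Real.sqrt 2 := by positivity
  have hval : cstar 0 + cstar 1 + cstar 2 - cstar 3 = 2 * Real.sqrt 2 := by
    rw [cs0, cs1, cs2, cs3]
    field_simp
    nlinarith [h2]
  have hgt : (2 : ℝ) < 2 * Real.sqrt 2 := by nlinarith [h2, hpos]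
  refine ⟨fun c hc => tsirelson hc, cstar_mem, hval, fun c hc he => tsirelson_eq hc he,
    fun hmem => ?_, hgt, fun c hc => cpoly_bound hc⟩
  have := cpoly_bound hmem
  rw [hval] at this
  linarith
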